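/- If μ: 𝒜 → [0,∞) is grade-2 additive, then for any n ≥ 3 and any mutually disjoint sets A₁, …, Aₙ ∈ 𝒜 we have μ(A₁ ∪ ⋯ ∪ Aₙ) = Σ_{1 ≤ i < j ≤ n} μ(Aᵢ ∪ Aⱼ) − (n − 2) Σ_{i=1}^{n} μ(Aᵢ). -/

import Mathlib

/-- A set function `μ` on the measurable sets of `X` is *grade-2 additive* if
`μ(A ∪ B ∪ C) = μ(A ∪ B) + μ(A ∪ C) + μ(B ∪ C) − μ(A) − μ(B) − μ(C)`
for all mutually disjoint measurable `A, B, C`. -/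
def Grade2Additive {X : Type*} [MeasurableSpace X] (μ : Set X → ℝ) : Prop :=
  ∀ A B C : Set X, MeasurableSet A → MeasurableSet B → MeasurableSet C →
    Disjoint A B → Disjoint A C → Disjoint B C →
    μ (A ∪ B ∪ C) = μ (A ∪ B) + μ (A ∪ C) + μ (B ∪ C) - μ A - μ B - μ C

lemma grade2_empty {X : Type*} [MeasurableSpace X] {μ : Set X → ℝ}
    (hμ : Grade2Additive μ) : μ ∅ = 0 := by
  have := hμ ∅ ∅ ∅ MeasurableSet.empty MeasurableSet.empty MeasurableSet.empty
    (by simp) (by simp) (by simp)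
  simp at this
  linarith

lemma grade2_key {X : Type*} [MeasurableSpace X] {μ : Set X → ℝ}
    (hμ : Grade2Additive μ) {ι : Type*} [DecidableEq ι] (A : ι → Set X)
    (hA : ∀ i, MeasurableSet (A i))
    (hd : Pairwise (Function.onFun Disjoint A)) (s : Finset ι) :
    μ (⋃ i ∈ s, A i) =
      ((∑ i ∈ s, ∑ j ∈ s, μ (A i ∪ A j)) - ∑ i ∈ s, μ (A i)) / 2
        - ((s.card : ℝ) - 2) * ∑ i ∈ s, μ (A i) := by
  induction s using Finset.strongInduction with
  | _ s ih =>
    rcases Nat.lt_or_ge s.card 3 with hc | hc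
    · interval_cases h : s.card
      · obtain rfl := Finset.card_eq_zero.mp h
        simp [grade2_empty hμ]
      · obtain ⟨a, rfl⟩ := Finset.card_eq_one.mp h
        simp
        ring
      · obtain ⟨a, b, hab, rfl⟩ := Finset.card_eq_two.mp h
        simp [Finset.sum_insert, Finset.sum_pair hab, hab, Set.union_comm (A b) (A a)]
        ring
    · -- card ≥ 3 : extract two elements
      obtain ⟨a, ha⟩ := Finset.card_pos.mp (show 0 < s.card by omega)
      have hca : 2 ≤ (s.erase a).card := by
        rw [Finset.card_erase_of_mem ha]; omega
      obtain ⟨b, hb⟩ := Finset.card_pos.mp (by omega : 0 < (s.erase a).card)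
      set t := (s.erase a).erase b with ht
      have hbt : b ∉ t := Finset.notMem_erase _ _
      have hat : a ∉ insert b t := by
        simp only [Finset.mem_insert]
        rintro (rfl | h)
        · exact (Finset.mem_erase.mp hb).1 rfl
        · exact Finset.notMem_erase a _ (Finset.mem_of_mem_erase h)
      have hs : s = insert a (insert b t) := by
        rw [ht, Finset.insert_erase hb, Finset.insert_erase ha]
      have hita : ∀ i ∈ t, i ≠ a := fun i hi =>
        fun h => Finset.notMem_erase a _ (h ▸ Finset.mem_of_mem_erase hi)
      have hitb : ∀ i ∈ t, i ≠ b := fun i hi => fun h => hbt (h ▸ hi)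
      have hab : a ≠ b := fun h => (Finset.mem_erase.mp hb).1 h.symm
      have hta : a ∉ t := fun h => hita a h rfl
      set B := ⋃ i ∈ t, A i with hB
      have hBm : MeasurableSet B := t.measurableSet_biUnion (fun i _ => hA i)
      have hdBa : Disjoint B (A a) := by
        simp only [hB, Set.disjoint_iUnion_left]
        exact fun i hi => hd (hita i hi)
      have hdBb : Disjoint B (A b) := by
        simp only [hB, Set.disjoint_iUnion_left]
        exact fun i hi => hd (hitb i hi)
      have hdab : Disjoint (A a) (A b) := hd hab
      have hunion : (⋃ i ∈ s, A i) = B ∪ A a ∪ A b := by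
        rw [hs]
        simp only [Finset.set_biUnion_insert]
        rw [hB]
        ac_rfl
      have hBa : B ∪ A a = ⋃ i ∈ insert a t, A i := by
        rw [Finset.set_biUnion_insert, Set.union_comm]
      have hBb : B ∪ A b = ⋃ i ∈ insert b t, A i := by
        rw [Finset.set_biUnion_insert, Set.union_comm]
      have key := hμ B (A a) (A b) hBm (hA a) (hA b) hdBa hdBb hdab
      -- strict subsets
      have h1 : insert a t ⊂ s := by
        rw [hs]
        refine (Finset.ssubset_iff_of_subset ?_).mpr ⟨b, by simp, by simp [hab.symm, hbt]⟩
        intro x; simp; tauto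
      have h2 : insert b t ⊂ s := by
        rw [hs]
        refine (Finset.ssubset_iff_of_subset ?_).mpr ⟨a, by simp, ?_⟩
        · intro x; simp; tauto
        · simp only [Finset.mem_insert, not_or]
          exact ⟨hab, hta⟩
      have h3 : t ⊂ s := by
        rw [hs]
        refine (Finset.ssubset_iff_of_subset ?_).mpr ⟨a, by simp, hta⟩
        intro x hx; simp [hx]
      have iha := ih _ h1
      have ihb := ih _ h2
      have iht := ih _ h3
      rw [hunion, key, hBa, hBb, iha, ihb, hB, iht, hs]
      have e1 : ∑ i ∈ t, μ (A i ∪ A a) = ∑ i ∈ t, μ (A a ∪ A i) := by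
        simp_rw [Set.union_comm]
      have e2 : ∑ i ∈ t, μ (A i ∪ A b) = ∑ i ∈ t, μ (A b ∪ A i) := by
        simp_rw [Set.union_comm]
      have e3 : μ (A b ∪ A a) = μ (A a ∪ A b) := by rw [Set.union_comm]
      simp only [Finset.sum_insert hat, Finset.sum_insert hbt, Finset.sum_insert hta,
        Finset.card_insert_of_notMem hat, Finset.card_insert_of_notMem hbt,
        Finset.card_insert_of_notMem hta,
        Finset.sum_add_distrib, Set.union_self, e1, e2, e3]
      push_cast
      ring

/-- Theorem 2.2: if `μ` is grade-2 additive, then for any `n ≥ 3` and mutually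
disjoint measurable `A₁, …, Aₙ`,
`μ(A₁ ∪ ⋯ ∪ Aₙ) = Σ_{i<j} μ(Aᵢ ∪ Aⱼ) − (n−2) Σᵢ μ(Aᵢ)`. -/
theorem grade2Additive_nSets {X : Type*} [MeasurableSpace X] (μ : Set X → ℝ)
    (hpos : ∀ A : Set X, MeasurableSet A → 0 ≤ μ A)
    (hμ : Grade2Additive μ) (n : ℕ) (hn : 3 ≤ n)
    (A : Fin n → Set X) (hA : ∀ i, MeasurableSet (A i))
    (hd : Pairwise (Function.onFun Disjoint A)) :
    μ (⋃ i, A i) =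
      (∑ i : Fin n, ∑ j ∈ Finset.Ioi i, μ (A i ∪ A j))
        - ((n : ℝ) - 2) * ∑ i : Fin n, μ (A i) := by
  have key := grade2_key hμ A hA hd Finset.univ
  have huniv : (⋃ i, A i) = ⋃ i ∈ Finset.univ, A i := by simp
  have hdouble : ∑ i : Fin n, ∑ j : Fin n, μ (A i ∪ A j)
      = 2 * (∑ i : Fin n, ∑ j ∈ Finset.Ioi i, μ (A i ∪ A j)) + ∑ i : Fin n, μ (A i) := by
    have part : ∀ (g : Fin n → ℝ) (i : Fin n),
        ∑ j, g j = g i + ∑ j ∈ Finset.Ioi i, g j + ∑ j ∈ Finset.Iio i, g j := by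
      intro g i
      have h1 : Finset.univ.filter (fun j => i < j) = Finset.Ioi i := by ext j; simp
      have h2 : Finset.univ.filter (fun j => ¬ i < j) = Finset.Iic i := by ext j; simp
      rw [← Finset.sum_filter_add_sum_filter_not Finset.univ (fun j => i < j) g, h1, h2,
        ← Finset.sum_Iio_add_eq_sum_Iic]
      ring
    have swap : ∑ i : Fin n, ∑ j ∈ Finset.Iio i, μ (A i ∪ A j)
        = ∑ i : Fin n, ∑ j ∈ Finset.Ioi i, μ (A j ∪ A i) := by
      rw [Finset.sum_sigma', Finset.sum_sigma']
      refine Finset.sum_nbij' (fun p => ⟨p.2, p.1⟩) (fun p => ⟨p.2, p.1⟩) ?_ ?_ ?_ ?_ ?_ <;> simp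
    have symm : ∑ i : Fin n, ∑ j ∈ Finset.Ioi i, μ (A j ∪ A i)
        = ∑ i : Fin n, ∑ j ∈ Finset.Ioi i, μ (A i ∪ A j) :=
      Finset.sum_congr rfl fun i _ => Finset.sum_congr rfl fun j _ => by rw [Set.union_comm]
    calc ∑ i : Fin n, ∑ j : Fin n, μ (A i ∪ A j)
        = ∑ i : Fin n, (μ (A i ∪ A i) + ∑ j ∈ Finset.Ioi i, μ (A i ∪ A j)
            + ∑ j ∈ Finset.Iio i, μ (A i ∪ A j)) :=
          Finset.sum_congr rfl fun i _ => part (fun j => μ (A i ∪ A j)) i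
      _ = ∑ i : Fin n, μ (A i ∪ A i) + ∑ i : Fin n, ∑ j ∈ Finset.Ioi i, μ (A i ∪ A j)
            + ∑ i : Fin n, ∑ j ∈ Finset.Iio i, μ (A i ∪ A j) := by
          rw [Finset.sum_add_distrib, Finset.sum_add_distrib]
      _ = 2 * (∑ i : Fin n, ∑ j ∈ Finset.Ioi i, μ (A i ∪ A j)) + ∑ i : Fin n, μ (A i) := by
          rw [swap, symm]
          simp [Set.union_self]
          ring
  rw [huniv, key]
  rw [Finset.card_univ, Fintype.card_fin, hdouble]
  ring
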